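/- Let E be a compact right-topological semigroup that is the enveloping semigroup of a minimal metric system with E metrizable, and let I ⊆ E be a minimal left ideal with idempotent v = v², G = vI. If the compact set vI carries a group structure (from Ellis theory) in which both left and right multiplications are continuous, then vI is a compact topological group (multiplication jointly continuous and inversion continuous). -/

import Mathlib

open Topology Filter


/-- Ellis's theorem in the situation of a metrizable enveloping semigroup: a
group `G` carrying a compact metrizable topology in which all left and right
translations are continuous is a (compact) topological group. -/
theorem stmt15 (G : Type*) [Group G] [TopologicalSpace G] [CompactSpace G]
    [TopologicalSpace.MetrizableSpace G]
    (hl : ∀ a : G, Continuous fun b : G => a * b)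
    (hr : ∀ a : G, Continuous fun b : G => b * a) :
    IsTopologicalGroup G := by
  letI : MetricSpace G := TopologicalSpace.metrizableSpaceMetric G
  -- The sets of points whose left translation has a fixed modulus of continuity.
  set C : ℕ → ℕ → Set G := fun m n =>
    {a : G | ∀ b b' : G, dist b b' ≤ 1 / (n + 1 : ℝ) →
      dist (a * b) (a * b') ≤ 1 / (m + 1 : ℝ)} with hC
  have hCclosed : ∀ m n, IsClosed (C m n) := by
    intro m n
    have : C m n = ⋂ (b : G) (b' : G) (_ : dist b b' ≤ 1 / (n + 1 : ℝ)),
        {a : G | dist (a * b) (a * b') ≤ 1 / (m + 1 : ℝ)} := by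
      ext a; simp [hC, Set.mem_iInter]
    rw [this]
    refine isClosed_iInter fun b => isClosed_iInter fun b' => isClosed_iInter fun _ => ?_
    exact isClosed_le (Continuous.dist (hr b) (hr b')) continuous_const
  have hCcover : ∀ m, (Set.univ : Set G) ⊆ ⋃ n, C m n := by
    intro m a _
    have huc : UniformContinuous fun b : G => a * b :=
      CompactSpace.uniformContinuous_of_continuous (hl a)
    have hm : (0 : ℝ) < 1 / (m + 1 : ℝ) := by positivity
    obtain ⟨δ, hδ, hδ'⟩ := Metric.uniformContinuous_iff.mp huc _ hm
    obtain ⟨n, hn⟩ := exists_nat_one_div_lt hδ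
    refine Set.mem_iUnion.2 ⟨n, fun b b' hbb' => ?_⟩
    exact le_of_lt (hδ' (lt_of_le_of_lt hbb' hn))
  have hdense : ∀ m, Dense (⋃ n, interior (C m n)) := fun m =>
    IsGδ.dense_iUnion_interior_of_closed (IsGδ.univ) dense_univ (hCclosed m) (hCcover m)
  have hDdense : Dense (⋂ m, ⋃ n, interior (C m n)) :=
    dense_iInter_of_isOpen (fun m => isOpen_iUnion fun n => isOpen_interior) hdense
  obtain ⟨a₀, ha₀⟩ := hDdense.nonempty
  -- joint continuity of multiplication at every point `(a₀, b₀)`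
  have key : ∀ b₀ : G, ContinuousAt (fun p : G × G => p.1 * p.2) (a₀, b₀) := by
    intro b₀
    rw [ContinuousAt, Metric.tendsto_nhds]
    intro ε hε
    obtain ⟨m, hm⟩ := exists_nat_one_div_lt (half_pos hε)
    obtain ⟨n, hn⟩ := Set.mem_iUnion.1 (Set.mem_iInter.1 ha₀ m)
    have hA : {a : G | a ∈ interior (C m n) ∧ dist (a * b₀) (a₀ * b₀) < ε / 2} ∈ 𝓝 a₀ := by
      refine Filter.inter_mem (isOpen_interior.mem_nhds hn) ?_
      have := (hr b₀).continuousAt (x := a₀)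
      rw [ContinuousAt, Metric.tendsto_nhds] at this
      exact this _ (half_pos hε)
    have hB : Metric.closedBall b₀ (1 / (n + 1 : ℝ)) ∈ 𝓝 b₀ := by
      apply Metric.closedBall_mem_nhds; positivity
    rw [nhds_prod_eq]
    filter_upwards [Filter.prod_mem_prod hA hB] with p hp
    calc dist (p.1 * p.2) (a₀ * b₀)
        ≤ dist (p.1 * p.2) (p.1 * b₀) + dist (p.1 * b₀) (a₀ * b₀) := dist_triangle _ _ _
      _ < 1 / (m + 1 : ℝ) + ε / 2 :=
          add_lt_add_of_le_of_lt (interior_subset hp.1.1 _ _ hp.2) hp.1.2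
      _ < ε / 2 + ε / 2 := by linarith
      _ = ε := add_halves ε
  -- joint continuity everywhere, by translation
  have hmul : Continuous fun p : G × G => p.1 * p.2 := by
    rw [continuous_iff_continuousAt]
    rintro ⟨a, b⟩
    have heq : (fun p : G × G => p.1 * p.2) =
        (fun z : G => a * a₀⁻¹ * z) ∘ (fun p : G × G => p.1 * p.2) ∘
          (fun p : G × G => (a₀ * a⁻¹ * p.1, p.2)) := by
      funext p; simp [Function.comp]; group
    rw [heq]
    have h1 : Filter.Tendsto (fun p : G × G => (a₀ * a⁻¹ * p.1, p.2)) (𝓝 (a, b)) (𝓝 (a₀, b)) := by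
      have := (((hl (a₀ * a⁻¹)).comp continuous_fst).prodMk continuous_snd).continuousAt
        (x := ((a, b) : G × G))
      simpa [ContinuousAt, inv_mul_cancel_right] using this
    have h2 : Filter.Tendsto
        ((fun p : G × G => p.1 * p.2) ∘ fun p : G × G => (a₀ * a⁻¹ * p.1, p.2))
        (𝓝 (a, b)) (𝓝 (a₀ * b)) := Filter.Tendsto.comp (key b) h1
    have h3 := Filter.Tendsto.comp ((hl (a * a₀⁻¹)).continuousAt (x := a₀ * b)) h2
    have hgoal : ((fun z : G => a * a₀⁻¹ * z) ∘ (fun p : G × G => p.1 * p.2) ∘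
        fun p : G × G => (a₀ * a⁻¹ * p.1, p.2)) (a, b) = (fun z : G => a * a₀⁻¹ * z) (a₀ * b) := by
      simp only [Function.comp_apply]
      group
    unfold ContinuousAt
    rw [hgoal]
    exact h3
  -- continuity of inversion via the closed-graph/compactness argument
  haveI : ContinuousMul G := ⟨hmul⟩
  have hSclosed : IsClosed {p : G × G | p.1 * p.2 = 1} := isClosed_eq hmul continuous_const
  haveI : CompactSpace {p : G × G | p.1 * p.2 = 1} :=
    isCompact_iff_compactSpace.mp hSclosed.isCompact
  let e : {p : G × G | p.1 * p.2 = 1} ≃ G :=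
    { toFun := fun s => s.1.1
      invFun := fun x => ⟨(x, x⁻¹), mul_inv_cancel x⟩
      left_inv := by
        rintro ⟨⟨x, y⟩, hxy⟩
        simp only [Set.mem_setOf_eq] at hxy
        exact Subtype.ext (Prod.ext rfl (eq_inv_of_mul_eq_one_right hxy).symm)
      right_inv := fun x => rfl }
  have he : Continuous e := (continuous_fst.comp continuous_subtype_val)
  let h : {p : G × G | p.1 * p.2 = 1} ≃ₜ G := Continuous.homeoOfEquivCompactToT2 he
  have hinv : Continuous fun x : G => x⁻¹ := by
    have heq2 : (fun x : G => x⁻¹) = (fun s : {p : G × G | p.1 * p.2 = 1} => s.1.2) ∘ h.symm := by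
      funext x
      have hx : ((h.symm x : {p : G × G | p.1 * p.2 = 1}) : G × G) = (x, x⁻¹) := rfl
      exact (congrArg Prod.snd hx).symm
    rw [heq2]
    exact (continuous_snd.comp continuous_subtype_val).comp h.symm.continuous
  exact { continuous_mul := hmul, continuous_inv := hinv }
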